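/- Let (E,M) be a V-prefactorization system on a cotensored V-category B with M ⊆ Mono_V B, and suppose B has arbitrary class-indexed V-intersections of M-morphisms and V-pullbacks of M-morphisms along arbitrary morphisms. Then: (1) (E,M) is a V-factorization system on B; and (2) for any class Σ of morphisms of B, setting N := Σ^{↓V} ∩ M, the pair (N^{↑V}, N) is a V-factorization system on B. -/

import Mathlib

open CategoryTheory CategoryTheory.Limits CategoryTheory.MonoidalCategory

universe w v₁ v₂ v₃ v₄ u₁ u₂ u₃ u₄

namespace EnrichedFS

variable (V : Type u₁) [Category.{v₁} V] [MonoidalCategory V] [SymmetricCategory V]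
  [MonoidalClosed V]
variable (B : Type u₂) [Category.{v₂} B] [EnrichedOrdinaryCategory V B]

/-- `e` is `V`-orthogonal to `m`: the square of hom-objects
with top `B(A₂,m)`, left `B(e,X₁)`, right `B(e,X₂)`, bottom `B(A₁,m)`
is a pullback in `V`. -/
def VOrth {A₁ A₂ X₁ X₂ : B} (e : A₁ ⟶ A₂) (m : X₁ ⟶ X₂) : Prop :=
  IsPullback (eHomWhiskerLeft V A₂ m) (eHomWhiskerRight V e X₁)
    (eHomWhiskerRight V e X₂) (eHomWhiskerLeft V A₁ m)

/-- `H^{↓V}`: the class of morphisms to which every member of `H` is `V`-orthogonal. -/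
def vRlp (H : MorphismProperty B) : MorphismProperty B :=
  fun _ _ m => ∀ ⦃A₁ A₂ : B⦄ (e : A₁ ⟶ A₂), H e → VOrth V B e m

/-- `M^{↑V}`: the class of morphisms which are `V`-orthogonal to every member of `M`. -/
def vLlp (M : MorphismProperty B) : MorphismProperty B :=
  fun _ _ e => ∀ ⦃X₁ X₂ : B⦄ (m : X₁ ⟶ X₂), M m → VOrth V B e m

/-- ordinary orthogonality: unique diagonal fillers for every commutative square. -/
def OrdOrth {A₁ A₂ X₁ X₂ : B} (e : A₁ ⟶ A₂) (m : X₁ ⟶ X₂) : Prop :=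
  ∀ (u : A₁ ⟶ X₁) (v : A₂ ⟶ X₂), u ≫ m = e ≫ v →
    ∃! d : A₂ ⟶ X₁, e ≫ d = u ∧ d ≫ m = v

/-- `H^{↓}` (ordinary). -/
def ordRlp (H : MorphismProperty B) : MorphismProperty B :=
  fun _ _ m => ∀ ⦃A₁ A₂ : B⦄ (e : A₁ ⟶ A₂), H e → OrdOrth B e m

/-- `M^{↑}` (ordinary). -/
def ordLlp (M : MorphismProperty B) : MorphismProperty B :=
  fun _ _ e => ∀ ⦃X₁ X₂ : B⦄ (m : X₁ ⟶ X₂), M m → OrdOrth B e m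

/-- `(E,M)` is a `V`-prefactorization system: `E^{↓V} = M` and `M^{↑V} = E`. -/
def IsVPrefactorization (E M : MorphismProperty B) : Prop :=
  vRlp V B E = M ∧ vLlp V B M = E

/-- `(E,M)` is an ordinary prefactorization system. -/
def IsOrdPrefactorization (E M : MorphismProperty B) : Prop :=
  ordRlp B E = M ∧ ordLlp B M = E

/-- every morphism factors as a morphism in `E` followed by a morphism in `M`. -/
def FactorizationsExist (E M : MorphismProperty B) : Prop :=
  ∀ ⦃X Y : B⦄ (f : X ⟶ Y), ∃ (Z : B) (e : X ⟶ Z) (m : Z ⟶ Y), E e ∧ M m ∧ e ≫ m = f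

/-- `(E,M)` is a `V`-factorization system. -/
def IsVFactorizationSystem (E M : MorphismProperty B) : Prop :=
  IsVPrefactorization V B E M ∧ FactorizationsExist B E M

/-- `(E,M)` is an ordinary factorization system. -/
def IsOrdFactorizationSystem (E M : MorphismProperty B) : Prop :=
  IsOrdPrefactorization B E M ∧ FactorizationsExist B E M

/-- intersection of two classes of morphisms. -/
def interProp (M N : MorphismProperty B) : MorphismProperty B := fun _ _ f => M f ∧ N f

/-- `V`-monomorphisms. -/
def vMono : MorphismProperty B := fun _ _ m => ∀ A : B, Mono (eHomWhiskerLeft V A m)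

/-- `V`-epimorphisms. -/
def vEpi : MorphismProperty B := fun _ _ e => ∀ A : B, Mono (eHomWhiskerRight V e A)

/-- `V`-strong monomorphisms. -/
def vStrongMono : MorphismProperty B := fun _ _ m =>
  vMono V B m ∧ ∀ ⦃A₁ A₂ : B⦄ (e : A₁ ⟶ A₂), vEpi V B e → VOrth V B e m

/-- `V`-strong epimorphisms. -/
def vStrongEpi : MorphismProperty B := fun _ _ e =>
  vEpi V B e ∧ ∀ ⦃X₁ X₂ : B⦄ (m : X₁ ⟶ X₂), vMono V B m → VOrth V B e m

/-- ordinary monomorphisms, as a class. -/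
def ordMono : MorphismProperty B := fun _ _ m => Mono m

/-- ordinary epimorphisms, as a class. -/
def ordEpi : MorphismProperty B := fun _ _ e => Epi e

/-- ordinary strong monomorphisms. -/
def ordStrongMono : MorphismProperty B := fun _ _ m =>
  Mono m ∧ ∀ ⦃A₁ A₂ : B⦄ (e : A₁ ⟶ A₂), Epi e → OrdOrth B e m

/-- ordinary strong epimorphisms. -/
def ordStrongEpi : MorphismProperty B := fun _ _ e =>
  Epi e ∧ ∀ ⦃X₁ X₂ : B⦄ (m : X₁ ⟶ X₂), Mono m → OrdOrth B e m

/-- closure under composition with isomorphisms on either side. -/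
def ClosedUnderIsoComp (E : MorphismProperty B) : Prop :=
  (∀ ⦃X Y Z : B⦄ (e : X ⟶ Y) (i : Y ⟶ Z), E e → IsIso i → E (e ≫ i)) ∧
  (∀ ⦃X Y Z : B⦄ (i : X ⟶ Y) (e : Y ⟶ Z), IsIso i → E e → E (i ≫ e))

/-- a commutative square which is a `V`-pullback: it is sent to a pullback square
in `V` by every hom functor `B(A,-)`. -/
def IsVPullbackSq {P X Y Z : B} (p₁ : P ⟶ X) (p₂ : P ⟶ Y) (f : X ⟶ Z) (g : Y ⟶ Z) : Prop :=
  p₁ ≫ f = p₂ ≫ g ∧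
    ∀ A : B, IsPullback (eHomWhiskerLeft V A p₁) (eHomWhiskerLeft V A p₂)
      (eHomWhiskerLeft V A f) (eHomWhiskerLeft V A g)

/-- a commutative square which is a `V`-pushout: it is sent to a pullback square
in `V` by every hom functor `B(-,A)`. -/
def IsVPushoutSq {X Y₁ Y₂ Q : B} (f₁ : X ⟶ Y₁) (f₂ : X ⟶ Y₂) (i₁ : Y₁ ⟶ Q) (i₂ : Y₂ ⟶ Q) :
    Prop :=
  f₁ ≫ i₁ = f₂ ≫ i₂ ∧
    ∀ A : B, IsPullback (eHomWhiskerRight V i₁ A) (eHomWhiskerRight V i₂ A)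
      (eHomWhiskerRight V f₁ A) (eHomWhiskerRight V f₂ A)

/-- `B` has `V`-kernel pairs. -/
def HasVKernelPairs : Prop :=
  ∀ ⦃X Y : B⦄ (f : X ⟶ Y), ∃ (P : B) (p₁ p₂ : P ⟶ X), IsVPullbackSq V B p₁ p₂ f f

/-- `B` has `V`-cokernel pairs. -/
def HasVCokernelPairs : Prop :=
  ∀ ⦃X Y : B⦄ (f : X ⟶ Y), ∃ (Q : B) (i₁ i₂ : Y ⟶ Q), IsVPushoutSq V B f f i₁ i₂

/-- `m : P ⟶ C` is a `V`-fibre-product (`V`-wide-pullback) of the family `f i : X i ⟶ C`,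
with projections `π i`. -/
def IsVFibreProduct {ι : Type w} {C : B} {X : ι → B} (f : ∀ i, X i ⟶ C)
    {P : B} (m : P ⟶ C) (π : ∀ i, P ⟶ X i) : Prop :=
  (∀ i, π i ≫ f i = m) ∧
    ∀ (A : B) (Z : V) (z : Z ⟶ (A ⟶[V] C)) (zi : ∀ i, Z ⟶ (A ⟶[V] X i)),
      (∀ i, zi i ≫ eHomWhiskerLeft V A (f i) = z) →
        ∃! t : Z ⟶ (A ⟶[V] P), t ≫ eHomWhiskerLeft V A m = z ∧
          ∀ i, t ≫ eHomWhiskerLeft V A (π i) = zi i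

/-- `m : P ⟶ C` is an ordinary fibre product (wide pullback) of the family `f i : X i ⟶ C`. -/
def OrdIsFibreProduct {ι : Type w} {C : B} {X : ι → B} (f : ∀ i, X i ⟶ C)
    {P : B} (m : P ⟶ C) (π : ∀ i, P ⟶ X i) : Prop :=
  (∀ i, π i ≫ f i = m) ∧
    ∀ ⦃W' : B⦄ (z : W' ⟶ C) (zi : ∀ i, W' ⟶ X i), (∀ i, zi i ≫ f i = z) →
      ∃! t : W' ⟶ P, t ≫ m = z ∧ ∀ i, t ≫ π i = zi i

/-- a cone is a `V`-limit cone: it is sent to a limit cone in `V` by every `B(A,-)`. -/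
def IsVLimitCone {J : Type u₃} [Category.{v₃} J] {D : J ⥤ B} (c : Cone D) : Prop :=
  ∀ (A : B) (Z : V) (z : ∀ j : J, Z ⟶ (A ⟶[V] D.obj j)),
    (∀ ⦃j j' : J⦄ (φ : j ⟶ j'), z j ≫ eHomWhiskerLeft V A (D.map φ) = z j') →
      ∃! t : Z ⟶ (A ⟶[V] c.pt), ∀ j, t ≫ eHomWhiskerLeft V A (c.π.app j) = z j

/-- a cocone is a `V`-colimit cocone: it is sent to a limit cone in `V` by every `B(-,A)`. -/
def IsVColimitCocone {J : Type u₃} [Category.{v₃} J] {D : J ⥤ B} (c : Cocone D) : Prop :=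
  ∀ (A : B) (Z : V) (z : ∀ j : J, Z ⟶ (D.obj j ⟶[V] A)),
    (∀ ⦃j j' : J⦄ (φ : j ⟶ j'), z j' ≫ eHomWhiskerRight V (D.map φ) A = z j) →
      ∃! t : Z ⟶ (c.pt ⟶[V] A), ∀ j, t ≫ eHomWhiskerRight V (c.ι.app j) A = z j

/-- `B` has small `V`-limits. -/
def HasSmallVLimits : Prop :=
  ∀ (J : Type v₂) [SmallCategory J] (D : J ⥤ B), ∃ c : Cone D, IsVLimitCone V B c

/-- `B` has small `V`-colimits. -/
def HasSmallVColimits : Prop :=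
  ∀ (J : Type v₂) [SmallCategory J] (D : J ⥤ B), ∃ c : Cocone D, IsVColimitCocone V B c

/-- `B` has finite `V`-limits. -/
def HasFiniteVLimits : Prop :=
  ∀ (J : Type) [SmallCategory J] [FinCategory J] (D : J ⥤ B),
    ∃ c : Cone D, IsVLimitCone V B c

/-- `B` is well-powered with respect to the class `M`: every object has,
up to isomorphism, only a set of `M`-subobjects. -/
def WellPoweredWrt (M : MorphismProperty B) : Prop :=
  ∀ X : B, ∃ (ι : Type v₂) (Y : ι → B) (f : ∀ i, Y i ⟶ X), (∀ i, M (f i)) ∧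
    ∀ ⦃Z : B⦄ (g : Z ⟶ X), M g → ∃ (i : ι) (h : Z ≅ Y i), h.hom ≫ f i = g

/-- `B` is co-well-powered with respect to the class `E`. -/
def CoWellPoweredWrt (E : MorphismProperty B) : Prop :=
  ∀ X : B, ∃ (ι : Type v₂) (Y : ι → B) (f : ∀ i, X ⟶ Y i), (∀ i, E (f i)) ∧
    ∀ ⦃Z : B⦄ (g : X ⟶ Z), E g → ∃ (i : ι) (h : Y i ≅ Z), f i ≫ h.hom = g

/-- comparison morphism `B(T, X) ⟶ [v, B(A, X)]` in `V` induced by a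
unit `η : v ⟶ B(A, T)`, where `T` is a candidate tensor `v ⊗ A`. -/
def tensorComparison {v : V} {A T : B} (η : v ⟶ (A ⟶[V] T)) (X : B) :
    (T ⟶[V] X) ⟶ (ihom v).obj (A ⟶[V] X) :=
  MonoidalClosed.curry (eComp V A T X) ≫ (MonoidalClosed.pre η).app (A ⟶[V] X)

/-- `η : v ⟶ B(A,T)` exhibits `T` as a tensor `v ⊗ A` in the enriched sense. -/
def IsTensorUnit (v : V) (A T : B) (η : v ⟶ (A ⟶[V] T)) : Prop :=
  ∀ X : B, IsIso (tensorComparison V B η X)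

/-- `B` is tensored over `V`. -/
def Tensored : Prop :=
  ∀ (v : V) (A : B), ∃ (T : B) (η : v ⟶ (A ⟶[V] T)), IsTensorUnit V B v A T η

/-- `E` is closed under tensors: whenever tensors exist, `v ⊗ e` lies in `E` for `e ∈ E`. -/
def ClosedUnderTensors (E : MorphismProperty B) : Prop :=
  ∀ (v : V) ⦃A₁ A₂ : B⦄ (e : A₁ ⟶ A₂) {T₁ T₂ : B}
    (η₁ : v ⟶ (A₁ ⟶[V] T₁)) (η₂ : v ⟶ (A₂ ⟶[V] T₂)),
    IsTensorUnit V B v A₁ T₁ η₁ → IsTensorUnit V B v A₂ T₂ η₂ → E e →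
      ∀ t : T₁ ⟶ T₂, η₁ ≫ eHomWhiskerLeft V A₁ t = η₂ ≫ eHomWhiskerRight V e T₂ → E t

/-- comparison morphism `B(A, C) ⟶ [v, B(A, X)]` in `V` induced by a
counit `ε : v ⟶ B(C, X)`, where `C` is a candidate cotensor `[v, X]`. -/
def cotensorComparison {v : V} {C X : B} (ε : v ⟶ (C ⟶[V] X)) (A : B) :
    (A ⟶[V] C) ⟶ (ihom v).obj (A ⟶[V] X) :=
  MonoidalClosed.curry ((β_ (C ⟶[V] X) (A ⟶[V] C)).hom ≫ eComp V A C X) ≫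
    (MonoidalClosed.pre ε).app (A ⟶[V] X)

/-- `ε : v ⟶ B(C,X)` exhibits `C` as a cotensor `[v, X]` in the enriched sense. -/
def IsCotensorCounit (v : V) (X C : B) (ε : v ⟶ (C ⟶[V] X)) : Prop :=
  ∀ A : B, IsIso (cotensorComparison V B ε A)

/-- `B` is cotensored over `V`. -/
def Cotensored : Prop :=
  ∀ (v : V) (X : B), ∃ (C : B) (ε : v ⟶ (C ⟶[V] X)), IsCotensorCounit V B v X C ε

/-- `M` is closed under cotensors: `[v, m]` lies in `M` for `m ∈ M`. -/
def ClosedUnderCotensors (M : MorphismProperty B) : Prop :=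
  ∀ (v : V) ⦃X₁ X₂ : B⦄ (m : X₁ ⟶ X₂) {C₁ C₂ : B}
    (ε₁ : v ⟶ (C₁ ⟶[V] X₁)) (ε₂ : v ⟶ (C₂ ⟶[V] X₂)),
    IsCotensorCounit V B v X₁ C₁ ε₁ → IsCotensorCounit V B v X₂ C₂ ε₂ → M m →
      ∀ t : C₁ ⟶ C₂, ε₁ ≫ eHomWhiskerLeft V C₁ m = ε₂ ≫ eHomWhiskerRight V t X₂ → M t

/-- a `V`-functor from a `V`-category `J` to an enriched ordinary category `D`. -/
structure VFunctor (J : Type u₃) [EnrichedCategory V J]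
    (D : Type u₄) [Category.{v₄} D] [EnrichedOrdinaryCategory V D] where
  obj : J → D
  emap : ∀ X Y : J, (X ⟶[V] Y) ⟶ (obj X ⟶[V] obj Y)
  emap_id : ∀ X : J, eId V X ≫ emap X X = eId V (obj X)
  emap_comp : ∀ X Y Z : J,
    eComp V X Y Z ≫ emap X Z = (emap X Y ⊗ₘ emap Y Z) ≫ eComp V (obj X) (obj Y) (obj Z)

/-- the underlying action of a `V`-functor on ordinary morphisms. -/
def VFunctor.map' {J : Type u₃} [Category.{v₃} J] [EnrichedOrdinaryCategory V J]
    {D : Type u₄} [Category.{v₄} D] [EnrichedOrdinaryCategory V D]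
    (F : VFunctor V J D) {X Y : J} (f : X ⟶ Y) : F.obj X ⟶ F.obj Y :=
  (eHomEquiv V).symm (eHomEquiv V f ≫ F.emap X Y)

/-- a `V`-adjunction `F ⊣ G`, given by a `V`-natural isomorphism
`D(F A, X) ≅ A(A, G X)` of hom-objects. -/
structure VAdjunction {A : Type u₃} [Category.{v₃} A] [EnrichedOrdinaryCategory V A]
    {D : Type u₄} [Category.{v₄} D] [EnrichedOrdinaryCategory V D]
    (F : VFunctor V A D) (G : VFunctor V D A) where
  iso : ∀ (X : A) (Y : D), (F.obj X ⟶[V] Y) ≅ (X ⟶[V] G.obj Y)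
  nat_right : ∀ (X : A) (Y Y' : D),
    eComp V (F.obj X) Y Y' ≫ (iso X Y').hom =
      ((iso X Y).hom ⊗ₘ G.emap Y Y') ≫ eComp V X (G.obj Y) (G.obj Y')
  nat_left : ∀ (X X' : A) (Y : D),
    (F.emap X X' ▷ (F.obj X' ⟶[V] Y)) ≫ eComp V (F.obj X) (F.obj X') Y ≫ (iso X Y).hom =
      ((X ⟶[V] X') ◁ (iso X' Y).hom) ≫ eComp V X X' (G.obj Y)

/-- a `V`-functor `J → V` (a weight), presented by its uncurried action. -/
structure VWeight (J : Type u₃) [EnrichedCategory V J] where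
  obj : J → V
  act : ∀ j j' : J, obj j ⊗ (j ⟶[V] j') ⟶ obj j'
  act_id : ∀ j : J, (obj j ◁ eId V j) ≫ act j j = (ρ_ (obj j)).hom
  act_comp : ∀ j j' j'' : J,
    (α_ (obj j) (j ⟶[V] j') (j' ⟶[V] j'')).inv ≫ (act j j' ▷ (j' ⟶[V] j'')) ≫ act j' j'' =
      (obj j ◁ eComp V j j' j'') ≫ act j j''

/-- a `V`-natural transformation between `V`-functors. -/
structure VNatTrans {J : Type u₃} [EnrichedCategory V J]
    {D : Type u₄} [Category.{v₄} D] [EnrichedOrdinaryCategory V D]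
    (F G : VFunctor V J D) where
  app : ∀ j : J, F.obj j ⟶ G.obj j
  naturality : ∀ j j' : J,
    F.emap j j' ≫ eHomWhiskerLeft V (F.obj j) (app j') =
      G.emap j j' ≫ eHomWhiskerRight V (app j) (G.obj j')

/-- `cone` exhibits `L` as the `V`-enriched weighted (indexed) limit `[W, F]`. -/
structure IsWeightedLimit {J : Type u₃} [EnrichedCategory V J]
    {D : Type u₄} [Category.{v₄} D] [EnrichedOrdinaryCategory V D]
    (W : VWeight V J) (F : VFunctor V J D) (L : D)
    (cone : ∀ j : J, W.obj j ⟶ (L ⟶[V] F.obj j)) : Prop where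
  natural : ∀ j j' : J,
    W.act j j' ≫ cone j' =
      (cone j ▷ (j ⟶[V] j')) ≫ ((L ⟶[V] F.obj j) ◁ F.emap j j') ≫
        eComp V L (F.obj j) (F.obj j')
  universal : ∀ (A : D) (Z : V) (μ : ∀ j : J, Z ⊗ W.obj j ⟶ (A ⟶[V] F.obj j)),
    (∀ j j' : J,
      (Z ◁ W.act j j') ≫ μ j' =
        (α_ Z (W.obj j) (j ⟶[V] j')).inv ≫ (μ j ▷ (j ⟶[V] j')) ≫
          ((A ⟶[V] F.obj j) ◁ F.emap j j') ≫ eComp V A (F.obj j) (F.obj j')) →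
      ∃! t : Z ⟶ (A ⟶[V] L), ∀ j : J,
        (t ▷ W.obj j) ≫ ((A ⟶[V] L) ◁ cone j) ≫ eComp V A L (F.obj j) = μ j

/-- `B` is `V`-finitely-well-complete: it has finite `V`-limits and `V`-intersections
of arbitrary class-indexed families of `V`-strong monomorphisms. -/
def VFinitelyWellComplete : Prop :=
  HasFiniteVLimits V B ∧
    ∀ {ι : Type (max u₂ v₂)} {C : B} (X : ι → B) (f : ∀ i, X i ⟶ C),
      (∀ i, vStrongMono V B (f i)) →
        ∃ (P : B) (m : P ⟶ C) (π : ∀ i, P ⟶ X i), IsVFibreProduct V B f m π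

/-- `B` is finitely well-complete (ordinary sense): it has finite limits and
intersections of arbitrary class-indexed families of strong monomorphisms. -/
def OrdFinitelyWellComplete : Prop :=
  HasFiniteLimits B ∧
    ∀ {ι : Type (max u₂ v₂)} {C : B} (X : ι → B) (f : ∀ i, X i ⟶ C),
      (∀ i, ordStrongMono B (f i)) →
        ∃ (P : B) (m : P ⟶ C) (π : ∀ i, P ⟶ X i), OrdIsFibreProduct B f m π
section Aux
set_option linter.unusedSectionVars false

lemma eHomEquiv_comp_l {X Y Z : B} (f : X ⟶ Y) (g : Y ⟶ Z) :
    eHomEquiv V (f ≫ g) = eHomEquiv V f ≫ eHomWhiskerLeft V X g := by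
  simp only [eHomEquiv_comp, tensorHom_def_assoc, MonoidalCategory.whiskerRight_id,
    ← unitors_equal, Category.assoc, Iso.inv_hom_id_assoc, eHomWhiskerLeft]

lemma eHomEquiv_comp_r {X Y Z : B} (f : X ⟶ Y) (g : Y ⟶ Z) :
    eHomEquiv V (f ≫ g) = eHomEquiv V g ≫ eHomWhiskerRight V f Z := by
  simp only [eHomEquiv_comp, tensorHom_def', id_whiskerLeft, Category.assoc,
    Iso.inv_hom_id_assoc, eHomWhiskerRight]

lemma isPullback_of_universal {P X Y W : V} {fst : P ⟶ X} {snd : P ⟶ Y} {f : X ⟶ W}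
    {g : Y ⟶ W} (comm : fst ≫ f = snd ≫ g)
    (h : ∀ (Z : V) (x : Z ⟶ X) (y : Z ⟶ Y), x ≫ f = y ≫ g →
      ∃! l : Z ⟶ P, l ≫ fst = x ∧ l ≫ snd = y) : IsPullback fst snd f g :=
  IsPullback.of_isLimit (PullbackCone.IsLimit.mk comm
    (fun s => (h _ s.fst s.snd s.condition).exists.choose)
    (fun s => (h _ s.fst s.snd s.condition).exists.choose_spec.1)
    (fun s => (h _ s.fst s.snd s.condition).exists.choose_spec.2)
    (fun s l h1 h2 => by
      have hu := h _ s.fst s.snd s.condition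
      exact (hu.unique ⟨h1, h2⟩ hu.exists.choose_spec)))

lemma mono_of_vMono {X Y : B} {f : X ⟶ Y} (h : vMono V B f) : Mono f := by
  constructor
  intro W a b hab
  apply (eHomEquiv V).injective
  haveI := h W
  have : eHomEquiv V a ≫ eHomWhiskerLeft V W f = eHomEquiv V b ≫ eHomWhiskerLeft V W f := by
    rw [← eHomEquiv_comp_l, ← eHomEquiv_comp_l, hab]
  exact (cancel_mono _).1 this

lemma VOrth.comp' {A₁ A₂ X₁ X₂ X₃ : B} {e : A₁ ⟶ A₂} {m : X₁ ⟶ X₂} {m' : X₂ ⟶ X₃}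
    (h : VOrth V B e m) (h' : VOrth V B e m') : VOrth V B e (m ≫ m') := by
  rw [VOrth, eHomWhiskerLeft_comp, eHomWhiskerLeft_comp]
  exact h.paste_horiz h'

lemma VOrth.of_vpullback {Z₁ Z₂ Q P : B} {n : Z₁ ⟶ Z₂} {w : Q ⟶ Z₂} {p : P ⟶ Z₁} {q : P ⟶ Q}
    (hsq : IsVPullbackSq V B p q n w) {A₁ A₂ : B} {e : A₁ ⟶ A₂}
    (hn : VOrth V B e n) : VOrth V B e q := by
  obtain ⟨hcomm, hpb⟩ := hsq
  apply isPullback_of_universal V (eHom_whisker_exchange V e q)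
  intro Z x y hxy
  have hcone : (x ≫ eHomWhiskerLeft V A₂ w) ≫ eHomWhiskerRight V e Z₂ =
      (y ≫ eHomWhiskerLeft V A₁ p) ≫ eHomWhiskerLeft V A₁ n := by
    rw [Category.assoc, eHom_whisker_exchange, ← Category.assoc, hxy,
      Category.assoc, Category.assoc, ← eHomWhiskerLeft_comp, ← eHomWhiskerLeft_comp, hcomm]
  set l₁ := hn.lift (x ≫ eHomWhiskerLeft V A₂ w) (y ≫ eHomWhiskerLeft V A₁ p) hcone with hl₁
  have hl₁fst : l₁ ≫ eHomWhiskerLeft V A₂ n = x ≫ eHomWhiskerLeft V A₂ w := hn.lift_fst _ _ _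
  have hl₁snd : l₁ ≫ eHomWhiskerRight V e Z₁ = y ≫ eHomWhiskerLeft V A₁ p := hn.lift_snd _ _ _
  set l := (hpb A₂).lift l₁ x hl₁fst with hl
  have hlp : l ≫ eHomWhiskerLeft V A₂ p = l₁ := (hpb A₂).lift_fst _ _ _
  have hlq : l ≫ eHomWhiskerLeft V A₂ q = x := (hpb A₂).lift_snd _ _ _
  refine ⟨l, ⟨hlq, ?_⟩, ?_⟩
  · apply (hpb A₁).hom_ext
    · rw [Category.assoc, ← eHom_whisker_exchange, ← Category.assoc, hlp, hl₁snd]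
    · rw [Category.assoc, ← eHom_whisker_exchange, ← Category.assoc, hlq, hxy]
  · rintro l' ⟨h1, h2⟩
    apply (hpb A₂).hom_ext
    · rw [hlp]
      apply hn.hom_ext
      · rw [Category.assoc, ← eHomWhiskerLeft_comp, hcomm, eHomWhiskerLeft_comp,
          ← Category.assoc, h1, hl₁fst]
      · rw [Category.assoc, eHom_whisker_exchange, ← Category.assoc, h2, hl₁snd]
    · rw [hlq, h1]

lemma VOrth.of_fibreProduct {ι : Type w} {C : B} {X : ι → B} {f : ∀ i, X i ⟶ C}
    {P : B} {mP : P ⟶ C} {π : ∀ i, P ⟶ X i} (hfp : IsVFibreProduct V B f mP π)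
    {A₁ A₂ : B} {e : A₁ ⟶ A₂} (hf : ∀ i, VOrth V B e (f i)) : VOrth V B e mP := by
  obtain ⟨hπ, huniv⟩ := hfp
  apply isPullback_of_universal V (eHom_whisker_exchange V e mP)
  intro Z x y hxy
  have hcone : ∀ i, x ≫ eHomWhiskerRight V e C =
      (y ≫ eHomWhiskerLeft V A₁ (π i)) ≫ eHomWhiskerLeft V A₁ (f i) := by
    intro i
    rw [hxy, Category.assoc, ← eHomWhiskerLeft_comp, hπ i]
  set li := fun i => (hf i).lift x (y ≫ eHomWhiskerLeft V A₁ (π i)) (hcone i) with hli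
  have hlifst : ∀ i, li i ≫ eHomWhiskerLeft V A₂ (f i) = x := fun i => (hf i).lift_fst _ _ _
  have hlisnd : ∀ i, li i ≫ eHomWhiskerRight V e (X i) = y ≫ eHomWhiskerLeft V A₁ (π i) :=
    fun i => (hf i).lift_snd _ _ _
  obtain ⟨l, ⟨hl1, hl2⟩, hluniq⟩ := huniv A₂ Z x li hlifst
  refine ⟨l, ⟨hl1, ?_⟩, ?_⟩
  · obtain ⟨s, hs, hsuniq⟩ := huniv A₁ Z (y ≫ eHomWhiskerLeft V A₁ mP)
      (fun i => y ≫ eHomWhiskerLeft V A₁ (π i))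
      (fun i => by rw [Category.assoc, ← eHomWhiskerLeft_comp, hπ i])
    have e1 : l ≫ eHomWhiskerRight V e P = s := by
      apply hsuniq
      constructor
      · rw [Category.assoc, ← eHom_whisker_exchange, ← Category.assoc, hl1, hxy]
      · intro i
        rw [Category.assoc, ← eHom_whisker_exchange, ← Category.assoc, hl2 i, hlisnd i]
    have e2 : y = s := hsuniq y ⟨rfl, fun _ => rfl⟩
    rw [e1, e2]
  · rintro l' ⟨h1, h2⟩
    apply hluniq
    constructor
    · exact h1
    · intro i
      apply (hf i).hom_ext
      · rw [Category.assoc, ← eHomWhiskerLeft_comp, hπ i, h1, hlifst i]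
      · rw [Category.assoc, eHom_whisker_exchange, ← Category.assoc, h2, hlisnd i]

lemma vpullback_lift {Z₁ Z₂ Q P : B} {n : Z₁ ⟶ Z₂} {w : Q ⟶ Z₂} {p : P ⟶ Z₁} {q : P ⟶ Q}
    (hsq : IsVPullbackSq V B p q n w) {W : B} (u : W ⟶ Z₁) (x : W ⟶ Q)
    (hux : u ≫ n = x ≫ w) : ∃ l : W ⟶ P, l ≫ p = u ∧ l ≫ q = x := by
  obtain ⟨hcomm, hpb⟩ := hsq
  have hcone : eHomEquiv V u ≫ eHomWhiskerLeft V W n =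
      eHomEquiv V x ≫ eHomWhiskerLeft V W w := by
    rw [← eHomEquiv_comp_l, ← eHomEquiv_comp_l, hux]
  refine ⟨(eHomEquiv V).symm ((hpb W).lift (eHomEquiv V u) (eHomEquiv V x) hcone), ?_, ?_⟩
  · apply (eHomEquiv V).injective
    rw [eHomEquiv_comp_l, Equiv.apply_symm_apply, (hpb W).lift_fst]
  · apply (eHomEquiv V).injective
    rw [eHomEquiv_comp_l, Equiv.apply_symm_apply, (hpb W).lift_snd]

lemma fibreProduct_lift {ι : Type w} {C : B} {X : ι → B} {f : ∀ i, X i ⟶ C}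
    {P : B} {mP : P ⟶ C} {π : ∀ i, P ⟶ X i} (hfp : IsVFibreProduct V B f mP π)
    {W : B} (z : W ⟶ C) (gi : ∀ i, W ⟶ X i) (hgi : ∀ i, gi i ≫ f i = z) :
    ∃ l : W ⟶ P, l ≫ mP = z := by
  obtain ⟨l, ⟨hl1, _⟩, _⟩ := hfp.2 W (𝟙_ V) (eHomEquiv V z) (fun i => eHomEquiv V (gi i))
    (fun i => by rw [← eHomEquiv_comp_l, hgi i])
  refine ⟨(eHomEquiv V).symm l, ?_⟩
  apply (eHomEquiv V).injective
  rw [eHomEquiv_comp_l, Equiv.apply_symm_apply, hl1]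

end Aux
section CotAux
set_option linter.unusedSectionVars false

lemma eComp_whiskerLeft (A C : B) {X₁ X₂ : B} (m : X₁ ⟶ X₂) :
    eComp V A C X₁ ≫ eHomWhiskerLeft V A m =
      ((A ⟶[V] C) ◁ eHomWhiskerLeft V C m) ≫ eComp V A C X₂ := by
  dsimp only [eHomWhiskerLeft]
  rw [rightUnitor_inv_naturality_assoc, ← whisker_exchange_assoc, ← e_assoc',
    associator_naturality_right_assoc, ← whiskerLeft_rightUnitor_inv_assoc]
  simp only [MonoidalCategory.whiskerLeft_comp, Category.assoc]

lemma eComp_whiskerRight {A₁ A₂ : B} (e : A₁ ⟶ A₂) (C X : B) :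
    eComp V A₂ C X ≫ eHomWhiskerRight V e X =
      (eHomWhiskerRight V e C ▷ (C ⟶[V] X)) ≫ eComp V A₁ C X := by
  dsimp only [eHomWhiskerRight]
  rw [leftUnitor_inv_naturality_assoc, whisker_exchange_assoc, ← e_assoc,
    associator_inv_naturality_left_assoc, leftUnitor_tensor_inv]
  simp only [comp_whiskerRight, Category.assoc, Iso.hom_inv_id_assoc]

lemma eComp_middle (A : B) {C₁ C₂ : B} (t : C₁ ⟶ C₂) (X : B) :
    (eHomWhiskerLeft V A t ▷ (C₂ ⟶[V] X)) ≫ eComp V A C₂ X =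
      ((A ⟶[V] C₁) ◁ eHomWhiskerRight V t X) ≫ eComp V A C₁ X := by
  dsimp only [eHomWhiskerLeft, eHomWhiskerRight]
  simp only [comp_whiskerRight, MonoidalCategory.whiskerLeft_comp, Category.assoc]
  rw [← e_assoc', associator_naturality_middle_assoc]
  have h : ((ρ_ ((A ⟶[V] C₁) : V)).inv ▷ ((C₂ ⟶[V] X) : V)) ≫
      (α_ ((A ⟶[V] C₁) : V) (𝟙_ V) ((C₂ ⟶[V] X) : V)).hom =
      ((A ⟶[V] C₁) : V) ◁ (λ_ ((C₂ ⟶[V] X) : V)).inv := by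
    monoidal_coherence
  rw [reassoc_of% h]

end CotAux
section CotAux2
set_option linter.unusedSectionVars false
open MonoidalClosed

lemma uncurry_comp_pre {v v' Z W : V} (a : W ⟶ (ihom v').obj Z) (ε : v ⟶ v') :
    MonoidalClosed.uncurry (a ≫ (MonoidalClosed.pre ε).app Z) =
      (ε ▷ W) ≫ MonoidalClosed.uncurry a := by
  simp only [uncurry_eq, MonoidalCategory.whiskerLeft_comp, Category.assoc,
    id_tensor_pre_app_comp_ev]
  rw [whisker_exchange_assoc]

lemma uncurry_cotensorComparison {v : V} {C X : B} (ε : v ⟶ (C ⟶[V] X)) (A : B) :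
    MonoidalClosed.uncurry (cotensorComparison V B ε A) =
      (ε ▷ (A ⟶[V] C)) ≫ (β_ (C ⟶[V] X) (A ⟶[V] C)).hom ≫ eComp V A C X := by
  rw [cotensorComparison, uncurry_comp_pre, uncurry_curry]

lemma cotensorComparison_natural_left {v : V} {X₁ X₂ C₁ C₂ : B} (m : X₁ ⟶ X₂)
    (ε₁ : v ⟶ (C₁ ⟶[V] X₁)) (ε₂ : v ⟶ (C₂ ⟶[V] X₂)) (t : C₁ ⟶ C₂)
    (ht : ε₁ ≫ eHomWhiskerLeft V C₁ m = ε₂ ≫ eHomWhiskerRight V t X₂) (A : B) :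
    cotensorComparison V B ε₁ A ≫ (ihom v).map (eHomWhiskerLeft V A m) =
      eHomWhiskerLeft V A t ≫ cotensorComparison V B ε₂ A := by
  apply MonoidalClosed.uncurry_injective
  rw [uncurry_natural_right, uncurry_natural_left, uncurry_cotensorComparison,
    uncurry_cotensorComparison]
  rw [Category.assoc, Category.assoc, eComp_whiskerLeft, ← BraidedCategory.braiding_naturality_left_assoc,
    ← comp_whiskerRight_assoc, ht, comp_whiskerRight_assoc]
  rw [whisker_exchange_assoc, BraidedCategory.braiding_naturality_right_assoc, eComp_middle,
    ← BraidedCategory.braiding_naturality_left_assoc]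

lemma cotensorComparison_natural_right {v : V} {C X : B} (ε : v ⟶ (C ⟶[V] X))
    {A₁ A₂ : B} (e : A₁ ⟶ A₂) :
    cotensorComparison V B ε A₂ ≫ (ihom v).map (eHomWhiskerRight V e X) =
      eHomWhiskerRight V e C ≫ cotensorComparison V B ε A₁ := by
  apply MonoidalClosed.uncurry_injective
  rw [uncurry_natural_right, uncurry_natural_left, uncurry_cotensorComparison,
    uncurry_cotensorComparison]
  rw [Category.assoc, Category.assoc, eComp_whiskerRight, ← BraidedCategory.braiding_naturality_right_assoc,
    whisker_exchange_assoc]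

/-- transpose of a morphism `A ⟶ C` along a cotensor counit. -/
def phi {v : V} {C X : B} (ε : v ⟶ (C ⟶[V] X)) (A : B) (s : A ⟶ C) : v ⟶ (A ⟶[V] X) :=
  ε ≫ eHomWhiskerRight V s X

lemma phi_eq {v : V} {C X : B} (ε : v ⟶ (C ⟶[V] X)) (A : B) (s : A ⟶ C) :
    phi V B ε A s = (ρ_ v).inv ≫
      MonoidalClosed.uncurry (eHomEquiv V s ≫ cotensorComparison V B ε A) := by
  rw [uncurry_natural_left, uncurry_cotensorComparison, whisker_exchange_assoc,
    BraidedCategory.braiding_naturality_right_assoc, ← rightUnitor_inv_naturality_assoc]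
  have h : (ρ_ ((C ⟶[V] X) : V)).inv ≫ (β_ ((C ⟶[V] X) : V) (𝟙_ V)).hom =
      (λ_ ((C ⟶[V] X) : V)).inv := by
    rw [← cancel_mono (λ_ ((C ⟶[V] X) : V)).hom, Category.assoc, braiding_leftUnitor,
      Iso.inv_hom_id, Iso.inv_hom_id]
  rw [reassoc_of% h]
  rfl

lemma phi_bijective {v : V} {C X : B} {ε : v ⟶ (C ⟶[V] X)} {A : B}
    (hε : IsIso (cotensorComparison V B ε A)) : Function.Bijective (phi V B ε A) := by
  constructor
  · intro s₁ s₂ h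
    rw [phi_eq, phi_eq, cancel_epi] at h
    replace h := MonoidalClosed.uncurry_injective h
    rw [cancel_mono] at h
    exact (eHomEquiv V).injective h
  · intro z
    refine ⟨(eHomEquiv V).symm
      (MonoidalClosed.curry ((ρ_ v).hom ≫ z) ≫ inv (cotensorComparison V B ε A)), ?_⟩
    rw [phi_eq, Equiv.apply_symm_apply, Category.assoc, IsIso.inv_hom_id, Category.comp_id,
      uncurry_curry, Iso.inv_hom_id_assoc]

lemma phi_comp_left {v : V} {X₁ X₂ C₁ C₂ : B} (m : X₁ ⟶ X₂)
    (ε₁ : v ⟶ (C₁ ⟶[V] X₁)) (ε₂ : v ⟶ (C₂ ⟶[V] X₂)) (t : C₁ ⟶ C₂)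
    (ht : ε₁ ≫ eHomWhiskerLeft V C₁ m = ε₂ ≫ eHomWhiskerRight V t X₂)
    (A : B) (s : A ⟶ C₁) :
    phi V B ε₂ A (s ≫ t) = phi V B ε₁ A s ≫ eHomWhiskerLeft V A m := by
  dsimp only [phi]
  rw [eHomWhiskerRight_comp, ← Category.assoc, ← ht, Category.assoc, Category.assoc,
    eHom_whisker_exchange]

lemma phi_comp_right {v : V} {C X : B} (ε : v ⟶ (C ⟶[V] X)) {A₁ A₂ : B}
    (e : A₁ ⟶ A₂) (s : A₂ ⟶ C) :
    phi V B ε A₁ (e ≫ s) = phi V B ε A₂ s ≫ eHomWhiskerRight V e X := by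
  dsimp only [phi]
  rw [eHomWhiskerRight_comp, Category.assoc]

end CotAux2
section CotAux3
set_option linter.unusedSectionVars false
open MonoidalClosed

lemma VOrth.cotensor {v : V} {X₁ X₂ C₁ C₂ : B} {m : X₁ ⟶ X₂}
    {ε₁ : v ⟶ (C₁ ⟶[V] X₁)} {ε₂ : v ⟶ (C₂ ⟶[V] X₂)}
    (hε₁ : IsCotensorCounit V B v X₁ C₁ ε₁) (hε₂ : IsCotensorCounit V B v X₂ C₂ ε₂)
    {t : C₁ ⟶ C₂} (ht : ε₁ ≫ eHomWhiskerLeft V C₁ m = ε₂ ≫ eHomWhiskerRight V t X₂)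
    {A₁ A₂ : B} {e : A₁ ⟶ A₂} (hm : VOrth V B e m) : VOrth V B e t := by
  haveI : PreservesLimitsOfSize.{0, 0} (ihom v) :=
    (ihom.adjunction v).rightAdjoint_preservesLimits
  have hsq := (ihom v).map_isPullback hm
  haveI h1 := hε₁ A₂; haveI h2 := hε₁ A₁; haveI h3 := hε₂ A₂; haveI h4 := hε₂ A₁
  refine hsq.of_iso (asIso (cotensorComparison V B ε₁ A₂)).symm
    (asIso (cotensorComparison V B ε₂ A₂)).symm
    (asIso (cotensorComparison V B ε₁ A₁)).symm
    (asIso (cotensorComparison V B ε₂ A₁)).symm ?_ ?_ ?_ ?_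
  · simp only [Iso.symm_hom, asIso_inv, IsIso.comp_inv_eq, Category.assoc, IsIso.eq_inv_comp]
    rw [← Category.assoc, IsIso.comp_inv_eq]
    exact (cotensorComparison_natural_left V B m ε₁ ε₂ t ht A₂)
  · simp only [Iso.symm_hom, asIso_inv, IsIso.comp_inv_eq, Category.assoc, IsIso.eq_inv_comp]
    rw [← Category.assoc, IsIso.comp_inv_eq]
    exact (cotensorComparison_natural_right V B ε₁ e)
  · simp only [Iso.symm_hom, asIso_inv, IsIso.comp_inv_eq, Category.assoc, IsIso.eq_inv_comp]
    rw [← Category.assoc, IsIso.comp_inv_eq]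
    exact (cotensorComparison_natural_right V B ε₂ e)
  · simp only [Iso.symm_hom, asIso_inv, IsIso.comp_inv_eq, Category.assoc, IsIso.eq_inv_comp]
    rw [← Category.assoc, IsIso.comp_inv_eq]
    exact (cotensorComparison_natural_left V B m ε₁ ε₂ t ht A₁)

lemma vOrth_of_ordOrth (hc : Cotensored V B) {X₁ X₂ A₁ A₂ : B} {e : A₁ ⟶ A₂} {m : X₁ ⟶ X₂}
    (hord : ∀ (v : V) (C₁ C₂ : B) (ε₁ : v ⟶ (C₁ ⟶[V] X₁)) (ε₂ : v ⟶ (C₂ ⟶[V] X₂)),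
      IsCotensorCounit V B v X₁ C₁ ε₁ → IsCotensorCounit V B v X₂ C₂ ε₂ →
      ∀ (t : C₁ ⟶ C₂), ε₁ ≫ eHomWhiskerLeft V C₁ m = ε₂ ≫ eHomWhiskerRight V t X₂ →
      OrdOrth B e t) : VOrth V B e m := by
  apply isPullback_of_universal V (eHom_whisker_exchange V e m)
  intro Z x y hxy
  obtain ⟨C₁, ε₁, hε₁⟩ := hc Z X₁
  obtain ⟨C₂, ε₂, hε₂⟩ := hc Z X₂
  obtain ⟨t, ht0⟩ := (phi_bijective V B (hε₂ C₁)).2 (ε₁ ≫ eHomWhiskerLeft V C₁ m)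
  have ht : ε₁ ≫ eHomWhiskerLeft V C₁ m = ε₂ ≫ eHomWhiskerRight V t X₂ := ht0.symm
  obtain ⟨s₂, hs₂⟩ := (phi_bijective V B (hε₂ A₂)).2 x
  obtain ⟨s₁, hs₁⟩ := (phi_bijective V B (hε₁ A₁)).2 y
  have hsq : s₁ ≫ t = e ≫ s₂ := by
    apply (phi_bijective V B (hε₂ A₁)).1
    rw [phi_comp_left V B m ε₁ ε₂ t ht A₁ s₁, phi_comp_right, hs₁, hs₂, hxy]
  obtain ⟨d, ⟨hd1, hd2⟩, hdu⟩ := hord Z C₁ C₂ ε₁ ε₂ hε₁ hε₂ t ht s₁ s₂ hsq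
  refine ⟨phi V B ε₁ A₂ d, ⟨?_, ?_⟩, ?_⟩
  · rw [← phi_comp_left V B m ε₁ ε₂ t ht A₂ d, hd2, hs₂]
  · rw [← phi_comp_right, hd1, hs₁]
  · rintro l ⟨h1, h2⟩
    obtain ⟨d', hd'⟩ := (phi_bijective V B (hε₁ A₂)).2 l
    have hd'd : d' = d := by
      apply hdu
      constructor
      · apply (phi_bijective V B (hε₁ A₁)).1
        rw [phi_comp_right, hd', hs₁, h2]
      · apply (phi_bijective V B (hε₂ A₂)).1
        rw [phi_comp_left V B m ε₁ ε₂ t ht A₂ d', hd', hs₂, h1]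
    rw [← hd', hd'd]

end CotAux3
section Main
set_option linter.unusedSectionVars false

lemma fact_exists (hc : Cotensored V B) (H : MorphismProperty B)
    (hmono : ∀ ⦃X Y : B⦄ (f : X ⟶ Y), vRlp V B H f → vMono V B f)
    (hint : ∀ {ι : Type (max u₂ v₂)} {C : B} (X : ι → B) (f : ∀ i, X i ⟶ C),
      (∀ i, vRlp V B H (f i)) →
        ∃ (P : B) (m : P ⟶ C) (π : ∀ i, P ⟶ X i), IsVFibreProduct V B f m π)
    (hpb : ∀ ⦃X Z Q : B⦄ (m : X ⟶ Z) (g : Q ⟶ Z), vRlp V B H m →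
      ∃ (P : B) (p : P ⟶ X) (f : P ⟶ Q), IsVPullbackSq V B p f m g) :
    FactorizationsExist B (vLlp V B (vRlp V B H)) (vRlp V B H) := by
  intro X Y f
  set N := vRlp V B H with hN
  let ι : Type (max u₂ v₂) := Σ Z : B, {m : Z ⟶ Y // N m ∧ ∃ g : X ⟶ Z, g ≫ m = f}
  obtain ⟨P, mP, π, hfp⟩ := hint (fun i : ι => i.1) (fun i => i.2.1) (fun i => i.2.2.1)
  have hNmP : N mP := fun A₁ A₂ h hh => VOrth.of_fibreProduct V B hfp
    (fun i => i.2.2.1 h hh)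
  obtain ⟨e, he⟩ := fibreProduct_lift V B hfp f (fun i => (i.2.2.2).choose)
    (fun i => (i.2.2.2).choose_spec)
  have hmonoP : Mono mP := mono_of_vMono V B (hmono mP hNmP)
  have hord : ∀ ⦃Z₁ Z₂ : B⦄ (n : Z₁ ⟶ Z₂), N n → OrdOrth B e n := by
    intro Z₁ Z₂ n hn u w huw
    obtain ⟨Q, p, q, hsq⟩ := hpb n w hn
    have hNq : N q := fun A₁ A₂ h hh => VOrth.of_vpullback V B hsq (hn h hh)
    have hNqm : N (q ≫ mP) := fun A₁ A₂ h hh => VOrth.comp' V B (hNq h hh) (hNmP h hh)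
    obtain ⟨x, hxp, hxq⟩ := vpullback_lift V B hsq u e huw
    set i₀ : ι := ⟨Q, ⟨q ≫ mP, hNqm, ⟨x, by rw [← Category.assoc, hxq, he]⟩⟩⟩ with hi₀
    have hπ : π i₀ ≫ (q ≫ mP) = mP := hfp.1 i₀
    have hsplit : π i₀ ≫ q = 𝟙 P := by
      rw [← cancel_mono mP, Category.assoc, hπ, Category.id_comp]
    have hmonoq : Mono q := mono_of_vMono V B (hmono q hNq)
    have hex : e ≫ π i₀ = x := by
      rw [← cancel_mono q, Category.assoc, hsplit, Category.comp_id, hxq]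
    have hmonon : Mono n := mono_of_vMono V B (hmono n hn)
    refine ⟨π i₀ ≫ p, ⟨?_, ?_⟩, ?_⟩
    · rw [← Category.assoc, hex, hxp]
    · rw [Category.assoc, hsq.1, ← Category.assoc, hsplit, Category.id_comp]
    · rintro d ⟨hd1, hd2⟩
      rw [← cancel_mono n, hd2, Category.assoc, hsq.1, ← Category.assoc, hsplit,
        Category.id_comp]
  refine ⟨P, e, mP, ?_, hNmP, he⟩
  intro Z₁ Z₂ n hn
  apply vOrth_of_ordOrth V B hc
  intro v C₁ C₂ ε₁ ε₂ hε₁ hε₂ t ht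
  have hNt : N t := fun A₁ A₂ hmor hh => VOrth.cotensor V B hε₁ hε₂ ht (hn hmor hh)
  exact hord t hNt

lemma galois_vRlp (H : MorphismProperty B) :
    vRlp V B (vLlp V B (vRlp V B H)) = vRlp V B H := by
  funext X Y f
  apply propext
  constructor
  · intro hf A₁ A₂ e he
    exact hf e (fun X₁ X₂ m hm => hm e he)
  · intro hf A₁ A₂ e he
    exact he f hf

end Main
/-- Let `(E,M)` be a `V`-prefactorization system on a cotensored `V`-category with
`M ⊆ Mono_V B`, such that `B` has `V`-intersections of `M`-morphisms and `V`-pullbacks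
of `M`-morphisms. Then `(E,M)` is a `V`-factorization system, and for any class `Σ`,
setting `N = Σ^{↓V} ∩ M`, the pair `(N^{↑V}, N)` is a `V`-factorization system. -/
theorem stmt14 (hc : Cotensored V B) (E M : MorphismProperty B)
    (h : IsVPrefactorization V B E M)
    (hmono : ∀ ⦃X Y : B⦄ (f : X ⟶ Y), M f → vMono V B f)
    (hint : ∀ {ι : Type (max u₂ v₂)} {C : B} (X : ι → B) (f : ∀ i, X i ⟶ C),
      (∀ i, M (f i)) →
        ∃ (P : B) (m : P ⟶ C) (π : ∀ i, P ⟶ X i), IsVFibreProduct V B f m π)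
    (hpb : ∀ ⦃X Z Q : B⦄ (m : X ⟶ Z) (g : Q ⟶ Z), M m →
      ∃ (P : B) (p : P ⟶ X) (f : P ⟶ Q), IsVPullbackSq V B p f m g) :
    IsVFactorizationSystem V B E M ∧
      ∀ S : MorphismProperty B,
        IsVFactorizationSystem V B
          (vLlp V B (interProp B (vRlp V B S) M)) (interProp B (vRlp V B S) M) := by


  obtain ⟨h1, h2⟩ := h
  constructor
  · -- part 1
    refine ⟨⟨h1, h2⟩, ?_⟩
    have fe := fact_exists V B hc E
      (fun X Y f hf => hmono f (h1 ▸ hf))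
      (fun {ι C} Xs fs hfs => hint Xs fs (fun i => h1 ▸ hfs i))
      (fun X Z Q m g hm => hpb m g (h1 ▸ hm))
    rw [h1, h2] at fe
    exact fe
  · -- part 2
    intro S
    have hNH : interProp B (vRlp V B S) M =
        vRlp V B (fun _ _ f => S f ∨ E f) := by
      rw [← h1]
      funext X Y f
      apply propext
      constructor
      · rintro ⟨hS, hE⟩ A₁ A₂ e he
        rcases he with he | he
        exacts [hS e he, hE e he]
      · intro hf
        exact ⟨fun A₁ A₂ e he => hf e (Or.inl he), fun A₁ A₂ e he => hf e (Or.inr he)⟩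
    rw [hNH]
    set H : MorphismProperty B := fun _ _ f => S f ∨ E f with hH
    have hsub : ∀ ⦃X Y : B⦄ (f : X ⟶ Y), vRlp V B H f → M f := by
      rw [← hNH]
      exact fun X Y f hf => hf.2
    refine ⟨⟨galois_vRlp V B H, rfl⟩, ?_⟩
    exact fact_exists V B hc H
      (fun X Y f hf => hmono f (hsub f hf))
      (fun {ι C} Xs fs hfs => hint Xs fs (fun i => hsub _ (hfs i)))
      (fun X Z Q m g hm => hpb m g (hsub m hm))

end EnrichedFS
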